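/- arXiv:1904.12541 — 4 statements merged into one kernel-verified Lean document; each statement's English description precedes it below -/
import Mathlib

section
/- If a Lie algebra g admits two stratifications g = V_1 ⊕ ⋯ ⊕ V_r = W_1 ⊕ ⋯ ⊕ W_s, then r = s and there exists a Lie algebra automorphism A of g with A(V_i) = W_i for all i; consequently the homogeneous dimension Q = Σ i·dim(V_i) is independent of the stratification. -/
open Module

/-- `V 1, …, V r` is a stratification of the Lie algebra `g`:
`g = V 1 ⊕ ⋯ ⊕ V r`, `[V 1, V i] = V (i+1)` for `1 ≤ i ≤ r`, `V (r+1) = 0`,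
`V r ≠ 0`. -/
def IsStratification (g : Type*) [LieRing g] [LieAlgebra ℝ g]
    (r : ℕ) (V : ℕ → Submodule ℝ g) : Prop :=
  1 ≤ r ∧
  (⨆ i ∈ Finset.Icc 1 r, V i = (⊤ : Submodule ℝ g)) ∧
  iSupIndep (fun i : Finset.Icc 1 r => V i) ∧
  (∀ i, 1 ≤ i → i ≤ r →
    V (i + 1) = Submodule.span ℝ {z : g | ∃ x ∈ V 1, ∃ y ∈ V i, ⁅x, y⁆ = z}) ∧
  V (r + 1) = ⊥ ∧ V r ≠ ⊥

namespace StratAux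

variable {g : Type*} [LieRing g] [LieAlgebra ℝ g]

/-- The "tail" `V k ⊔ ⋯ ⊔ V r` of a stratification; it coincides with the `k`-th term of
the lower central series and is therefore independent of the stratification. -/
def cser (r : ℕ) (V : ℕ → Submodule ℝ g) (k : ℕ) : Submodule ℝ g :=
  ⨆ m ∈ Finset.Icc k r, V m

/-- The pieces of the stratification, truncated to `⊥` above `r`. -/
def Vb (r : ℕ) (V : ℕ → Submodule ℝ g) (k : ℕ) : Submodule ℝ g :=
  if k ≤ r then V k else ⊥

variable {r : ℕ} {V : ℕ → Submodule ℝ g}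

lemma Vb_eq {k : ℕ} (h : k ≤ r) : Vb r V k = V k := if_pos h

lemma le_cser {k m : ℕ} (h : m ∈ Finset.Icc k r) : V m ≤ cser r V k :=
  le_biSup _ h

lemma cser_mono {k k' : ℕ} (h : k' ≤ k) : cser r V k ≤ cser r V k' := by
  refine iSup₂_le fun m hm => le_cser ?_
  simp only [Finset.mem_Icc] at hm ⊢
  omega

lemma cser_bot {k : ℕ} (h : r < k) : cser r V k = ⊥ := by
  rw [cser, Finset.Icc_eq_empty (by omega)]
  simp

lemma cser_induction {k : ℕ} {C : g → Prop} {x : g} (hx : x ∈ cser r V k)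
    (mem : ∀ m, m ∈ Finset.Icc k r → ∀ y ∈ V m, C y) (zero : C 0)
    (add : ∀ y z, C y → C z → C (y + z)) : C x := by
  have hx' : x ∈ ⨆ m : ℕ, ⨆ _ : m ∈ Finset.Icc k r, V m := hx
  refine Submodule.iSup_induction (motive := C) (fun m : ℕ => ⨆ _ : m ∈ Finset.Icc k r, V m)
    hx' ?_ zero add
  intro m y hy
  by_cases hm : m ∈ Finset.Icc k r
  · exact mem m hm y (by simpa [hm] using hy)
  · simp only [hm, iSup_false] at hy
    simpa [show y = 0 by simpa using hy] using zero

section Strat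

variable (hV : IsStratification g r V)
include hV

lemma cser_one : cser r V 1 = ⊤ := hV.2.1

lemma strat_bracket1 {m : ℕ} (h1 : 1 ≤ m) (hm : m ≤ r) {x y : g}
    (hx : x ∈ V 1) (hy : y ∈ V m) : ⁅x, y⁆ ∈ V (m + 1) := by
  rw [hV.2.2.2.1 m h1 hm]
  exact Submodule.subset_span ⟨x, hx, y, hy, rfl⟩

lemma bracket_Vb1 {m : ℕ} (h1 : 1 ≤ m) {x y : g} (hx : x ∈ V 1) (hy : y ∈ Vb r V m) :
    ⁅x, y⁆ ∈ Vb r V (m + 1) := by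
  unfold Vb at hy ⊢
  by_cases hm : m ≤ r
  · rw [if_pos hm] at hy
    have h := strat_bracket1 hV h1 hm hx hy
    by_cases hm1 : m + 1 ≤ r
    · rwa [if_pos hm1]
    · have hmr : m = r := by omega
      rw [if_neg hm1]
      rw [hmr] at h
      rwa [hV.2.2.2.2.1] at h
  · rw [if_neg hm] at hy
    have : y = 0 := by simpa using hy
    simp [this]

lemma bracket_graded (i : ℕ) (h1 : 1 ≤ i) : ∀ j, 1 ≤ j → ∀ x ∈ Vb r V i, ∀ y ∈ Vb r V j,
    ⁅x, y⁆ ∈ Vb r V (i + j) := by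
  induction i, h1 using Nat.le_induction with
  | base =>
    intro j hj x hx y hy
    have hx1 : x ∈ V 1 := by rwa [Vb_eq hV.1] at hx
    have h := bracket_Vb1 hV hj hx1 hy
    rwa [Nat.add_comm] at h
  | succ i hi IH =>
    intro j hj x hx y hy
    by_cases hir : i + 1 ≤ r
    · rw [Vb_eq hir, hV.2.2.2.1 i hi (by omega)] at hx
      induction hx using Submodule.span_induction with
      | mem z hz =>
        obtain ⟨u, hu, w, hw, rfl⟩ := hz
        rw [lie_lie]
        have hw' : w ∈ Vb r V i := by rwa [Vb_eq (by omega)]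
        have h1 : ⁅w, y⁆ ∈ Vb r V (i + j) := IH j hj w hw' y hy
        have h2 : ⁅u, ⁅w, y⁆⁆ ∈ Vb r V (i + j + 1) := bracket_Vb1 hV (by omega) hu h1
        have h3 : ⁅u, y⁆ ∈ Vb r V (j + 1) := bracket_Vb1 hV hj hu hy
        have h4 : ⁅w, ⁅u, y⁆⁆ ∈ Vb r V (i + (j + 1)) := IH (j + 1) (by omega) w hw' _ h3
        have e1 : i + j + 1 = i + 1 + j := by omega
        have e2 : i + (j + 1) = i + 1 + j := by omega
        rw [e1] at h2
        rw [e2] at h4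
        exact sub_mem h2 h4
      | zero => simp
      | add a b _ _ ha hb => rw [add_lie]; exact add_mem ha hb
      | smul t a _ ha => rw [smul_lie]; exact Submodule.smul_mem _ _ ha
    · rw [Vb, if_neg hir] at hx
      have : x = 0 := by simpa using hx
      simp [this]

omit hV in
lemma Vb_le_cser {m : ℕ} : Vb r V m ≤ cser r V m := by
  by_cases hm : m ≤ r
  · rw [Vb_eq hm]
    exact le_cser (by simp [Finset.mem_Icc, hm])
  · rw [Vb, if_neg hm]
    exact bot_le

lemma bracket_cser {a b : ℕ} (ha : 1 ≤ a) (hb : 1 ≤ b) {x y : g}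
    (hx : x ∈ cser r V a) (hy : y ∈ cser r V b) : ⁅x, y⁆ ∈ cser r V (a + b) := by
  refine cser_induction (C := fun x => ∀ y ∈ cser r V b, ⁅x, y⁆ ∈ cser r V (a + b))
    hx ?_ ?_ ?_ y hy
  · intro m hm z hz y' hy'
    refine cser_induction (C := fun y' => ⁅z, y'⁆ ∈ cser r V (a + b)) hy' ?_ ?_ ?_
    · intro n hn w hw
      simp only [Finset.mem_Icc] at hm hn
      have h := bracket_graded hV m (by omega) n (by omega) z
        (by rwa [Vb_eq hm.2]) w (by rwa [Vb_eq hn.2])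
      exact cser_mono (by omega) (Vb_le_cser h)
    · simp
    · intro y1 y2 h1 h2
      rw [lie_add]
      exact add_mem h1 h2
  · intro y' _; simp
  · intro y1 y2 h1 h2 y' hy'
    rw [add_lie]
    exact add_mem (h1 y' hy') (h2 y' hy')

lemma cser_succ {k : ℕ} (hk : 1 ≤ k) :
    cser r V (k + 1) = Submodule.span ℝ {z : g | ∃ x : g, ∃ y ∈ cser r V k, ⁅x, y⁆ = z} := by
  apply le_antisymm
  · refine iSup₂_le fun m hm => ?_
    simp only [Finset.mem_Icc] at hm
    obtain ⟨i, rfl⟩ : ∃ i, m = i + 1 := ⟨m - 1, by omega⟩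
    rw [hV.2.2.2.1 i (by omega) (by omega)]
    refine Submodule.span_mono ?_
    rintro z ⟨x, hx, y, hy, rfl⟩
    exact ⟨x, y, le_cser (by simp [Finset.mem_Icc]; omega) hy, rfl⟩
  · rw [Submodule.span_le]
    rintro z ⟨x, y, hy, rfl⟩
    have hx : x ∈ cser r V 1 := by rw [cser_one hV]; trivial
    have h := bracket_cser hV le_rfl hk hx hy
    rwa [Nat.add_comm] at h

lemma cser_eq {s : ℕ} {W : ℕ → Submodule ℝ g} (hW : IsStratification g s W) :
    ∀ k, 1 ≤ k → cser r V k = cser s W k := by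
  intro k hk
  induction k, hk using Nat.le_induction with
  | base => rw [cser_one hV, cser_one hW]
  | succ k hk IH => rw [cser_succ hV hk, cser_succ hW hk, IH]

lemma steps_le {s : ℕ} {W : ℕ → Submodule ℝ g} (hW : IsStratification g s W) : r ≤ s := by
  by_contra h
  push_neg at h
  have h1 : V r ≤ cser r V r := le_cser (by simp [Finset.mem_Icc, hV.1])
  rw [cser_eq hV hW r hV.1] at h1
  rw [cser_bot h] at h1
  exact hV.2.2.2.2.2 (le_bot_iff.mp h1)

end Strat


section Compl

variable {r : ℕ} {V : ℕ → Submodule ℝ g}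

/-- The complement `⨆_{m ≠ k} V m` of `V k`. -/
def rest (r : ℕ) (V : ℕ → Submodule ℝ g) (k : ℕ) : Submodule ℝ g :=
  ⨆ m ∈ (Finset.Icc 1 r).erase k, V m

variable (hV : IsStratification g r V)
include hV

lemma isCompl_rest {k : ℕ} (hk : k ∈ Finset.Icc 1 r) : IsCompl (V k) (rest r V k) := by
  constructor
  · have h := hV.2.2.1 ⟨k, hk⟩
    refine h.mono_right ?_
    refine iSup₂_le fun m hm => ?_
    rw [Finset.mem_erase] at hm
    exact le_iSup₂_of_le ⟨m, hm.2⟩ (fun he => hm.1 (congrArg Subtype.val he)) le_rfl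
  · rw [codisjoint_iff]
    have h1 : Finset.Icc 1 r = insert k ((Finset.Icc 1 r).erase k) :=
      (Finset.insert_erase hk).symm
    have h2 := hV.2.1
    rw [h1, Finset.iSup_insert] at h2
    exact h2

lemma disjoint_cser_succ {k : ℕ} (hk : k ∈ Finset.Icc 1 r) :
    Disjoint (V k) (cser r V (k + 1)) := by
  refine (isCompl_rest hV hk).disjoint.mono_right ?_
  refine iSup₂_le fun m hm => ?_
  simp only [Finset.mem_Icc] at hm
  refine le_iSup₂_of_le m ?_ le_rfl
  simp only [Finset.mem_erase, Finset.mem_Icc] at hk ⊢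
  omega

omit hV in
lemma cser_eq_sup {k : ℕ} (hk : k ∈ Finset.Icc 1 r) :
    cser r V k = V k ⊔ cser r V (k + 1) := by
  simp only [Finset.mem_Icc] at hk
  have h : Finset.Icc k r = insert k (Finset.Icc (k + 1) r) := by
    ext m
    simp only [Finset.mem_Icc, Finset.mem_insert]
    omega
  rw [cser, h, Finset.iSup_insert]
  rfl

lemma finrank_cser [FiniteDimensional ℝ g] {k : ℕ} (hk : k ∈ Finset.Icc 1 r) :
    finrank ℝ (cser r V k) = finrank ℝ (V k) + finrank ℝ (cser r V (k + 1)) := by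
  have h := Submodule.finrank_sup_add_finrank_inf_eq (V k) (cser r V (k + 1))
  rw [(disjoint_cser_succ hV hk).eq_bot] at h
  rw [cser_eq_sup hk]
  simpa using h

end Compl

section Proj

variable {r : ℕ} {V : ℕ → Submodule ℝ g}

open Classical in
/-- Projection onto `V k` along the other pieces, as an endomorphism of `g`. -/
noncomputable def proj (r : ℕ) (V : ℕ → Submodule ℝ g) (k : ℕ) : g →ₗ[ℝ] g :=
  if h : IsCompl (V k) (rest r V k) then
    (V k).subtype ∘ₗ Submodule.projectionOnto _ _ h
  else 0

variable (hV : IsStratification g r V)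
include hV

lemma proj_mem {k : ℕ} (hk : k ∈ Finset.Icc 1 r) (x : g) : proj r V k x ∈ V k := by
  rw [proj, dif_pos (isCompl_rest hV hk)]
  exact (Submodule.projectionOnto _ _ (isCompl_rest hV hk) x).2

lemma proj_eq_self {k : ℕ} (hk : k ∈ Finset.Icc 1 r) {x : g} (hx : x ∈ V k) :
    proj r V k x = x := by
  rw [proj, dif_pos (isCompl_rest hV hk)]
  have h := Submodule.projectionOnto_apply_left (isCompl_rest hV hk) ⟨x, hx⟩
  exact congrArg ((V k).subtype) h

lemma proj_eq_zero {k m : ℕ} (hk : k ∈ Finset.Icc 1 r) (hm : m ∈ Finset.Icc 1 r)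
    (hne : m ≠ k) {x : g} (hx : x ∈ V m) : proj r V k x = 0 := by
  rw [proj, dif_pos (isCompl_rest hV hk)]
  have hx' : x ∈ rest r V k :=
    (le_iSup₂_of_le m (Finset.mem_erase.mpr ⟨hne, hm⟩) le_rfl : V m ≤ rest r V k) hx
  have h := Submodule.projectionOnto_apply_right (isCompl_rest hV hk) ⟨x, hx'⟩
  exact congrArg ((V k).subtype) h

lemma proj_sub_mem {k : ℕ} (hk : k ∈ Finset.Icc 1 r) {x : g} (hx : x ∈ cser r V k) :
    x - proj r V k x ∈ cser r V (k + 1) := by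
  refine cser_induction (C := fun y => y - proj r V k y ∈ cser r V (k + 1)) hx ?_ ?_ ?_
  · intro m hm y hy
    by_cases he : m = k
    · subst he
      rw [proj_eq_self hV hk hy]
      simp
    · have hm1 : m ∈ Finset.Icc 1 r := by
        simp only [Finset.mem_Icc] at hm hk ⊢
        omega
      rw [proj_eq_zero hV hk hm1 he hy, sub_zero]
      refine le_cser ?_ hy
      simp only [Finset.mem_Icc] at hm ⊢
      omega
  · simp
  · intro y z hy hz
    have h : (y + z) - proj r V k (y + z) = (y - proj r V k y) + (z - proj r V k z) := by
      rw [map_add]; abel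
    rw [h]
    exact add_mem hy hz

end Proj

section Auto

variable {r : ℕ} {V W : ℕ → Submodule ℝ g}

/-- The linear map underlying the automorphism carrying one stratification to the other. -/
noncomputable def Amap (r : ℕ) (V W : ℕ → Submodule ℝ g) : g →ₗ[ℝ] g :=
  ∑ k ∈ Finset.Icc 1 r, (proj r W k) ∘ₗ (proj r V k)

variable (hV : IsStratification g r V) (hW : IsStratification g r W)
include hV hW

lemma Amap_apply {m : ℕ} (hm : m ∈ Finset.Icc 1 r) {x : g} (hx : x ∈ V m) :
    Amap r V W x = proj r W m x := by
  rw [Amap, LinearMap.sum_apply]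
  rw [Finset.sum_eq_single m]
  · rw [LinearMap.comp_apply, proj_eq_self hV hm hx]
  · intro k hk hne
    rw [LinearMap.comp_apply, proj_eq_zero hV hk hm (fun he => hne he.symm) hx, map_zero]
  · intro h
    exact absurd hm h

lemma Amap_mem_W {m : ℕ} (hm : m ∈ Finset.Icc 1 r) {x : g} (hx : x ∈ V m) :
    Amap r V W x ∈ W m := by
  rw [Amap_apply hV hW hm hx]
  exact proj_mem hW hm x

lemma Amap_sub_mem {m : ℕ} (hm : m ∈ Finset.Icc 1 r) {x : g} (hx : x ∈ V m) :
    Amap r V W x - x ∈ cser r W (m + 1) := by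
  rw [Amap_apply hV hW hm hx]
  have hx' : x ∈ cser r W m := by
    rw [← cser_eq hV hW m (by exact (Finset.mem_Icc.mp hm).1)]
    exact le_cser (by simp only [Finset.mem_Icc] at hm ⊢; omega) hx
  have h := proj_sub_mem hW hm hx'
  have h2 := neg_mem h
  rwa [neg_sub] at h2

lemma Amap_sub_mem_cser {k : ℕ} (hk : 1 ≤ k) {x : g} (hx : x ∈ cser r V k) :
    Amap r V W x - x ∈ cser r V (k + 1) := by
  refine cser_induction (C := fun y => Amap r V W y - y ∈ cser r V (k + 1)) hx ?_ ?_ ?_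
  · intro m hm y hy
    simp only [Finset.mem_Icc] at hm
    have h := Amap_sub_mem hV hW (show m ∈ Finset.Icc 1 r by
      simp only [Finset.mem_Icc]; omega) hy
    rw [← cser_eq hV hW (m + 1) (by omega)] at h
    exact cser_mono (by omega) h
  · simp
  · intro y z hy hz
    have h : (y + z) - Amap r V W (y + z)
        = (y - Amap r V W y) + (z - Amap r V W z) := by
      rw [map_add]; abel
    have h2 : Amap r V W (y + z) - (y + z)
        = (Amap r V W y - y) + (Amap r V W z - z) := by
      rw [map_add]; abel
    rw [h2]
    exact add_mem hy hz

lemma Amap_inj : Function.Injective (Amap r V W) := by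
  have key : ∀ x, Amap r V W x = 0 → x = 0 := by
    intro x hx0
    have h : ∀ n, x ∈ cser r V (1 + n) := by
      intro n
      induction n with
      | zero => rw [Nat.add_zero, cser_one hV]; trivial
      | succ n IH =>
        have h1 := Amap_sub_mem_cser hV hW (by omega) IH
        rw [hx0, zero_sub] at h1
        have h2 := neg_mem h1
        rw [neg_neg] at h2
        rwa [show 1 + (n + 1) = (1 + n) + 1 by omega]
    have h1 := h r
    rw [show 1 + r = r + 1 by omega, cser_bot (by omega)] at h1
    simpa using h1
  intro a b hab
  have h : Amap r V W (a - b) = 0 := by rw [map_sub, hab, sub_self]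
  exact sub_eq_zero.mp (key _ h)

lemma Amap_lie (x y : g) : Amap r V W ⁅x, y⁆ = ⁅Amap r V W x, Amap r V W y⁆ := by
  have piece : ∀ m ∈ Finset.Icc 1 r, ∀ n ∈ Finset.Icc 1 r, ∀ x ∈ V m, ∀ y ∈ V n,
      Amap r V W ⁅x, y⁆ = ⁅Amap r V W x, Amap r V W y⁆ := by
    intro m hm n hn x hx y hy
    have hm' := Finset.mem_Icc.mp hm
    have hn' := Finset.mem_Icc.mp hn
    have hAx : Amap r V W x ∈ W m := Amap_mem_W hV hW hm hx
    have hAy : Amap r V W y ∈ W n := Amap_mem_W hV hW hn hy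
    by_cases hmn : m + n ≤ r
    · have hxy : ⁅x, y⁆ ∈ V (m + n) := by
        have h := bracket_graded hV m (by omega) n (by omega) x
          (by rwa [Vb_eq hm'.2]) y (by rwa [Vb_eq hn'.2])
        rwa [Vb_eq hmn] at h
      have hmem : m + n ∈ Finset.Icc 1 r := by simp only [Finset.mem_Icc]; omega
      have h1 : Amap r V W ⁅x, y⁆ - ⁅x, y⁆ ∈ cser r W (m + n + 1) :=
        Amap_sub_mem hV hW hmem hxy
      have h2 : ⁅Amap r V W x, Amap r V W y⁆ - ⁅x, y⁆ ∈ cser r W (m + n + 1) := by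
        have e : ⁅Amap r V W x, Amap r V W y⁆ - ⁅x, y⁆
            = ⁅Amap r V W x - x, Amap r V W y⁆ + ⁅x, Amap r V W y - y⁆ := by
          rw [sub_lie, lie_sub]; abel
        rw [e]
        refine add_mem ?_ ?_
        · have ha : Amap r V W x - x ∈ cser r W (m + 1) := Amap_sub_mem hV hW hm hx
          have hb : Amap r V W y ∈ cser r W n :=
            le_cser (by simp only [Finset.mem_Icc]; omega) hAy
          have h := bracket_cser hW (by omega) (by omega) ha hb
          rwa [show m + 1 + n = m + n + 1 by omega] at h
        · have ha : x ∈ cser r W m := by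
            rw [← cser_eq hV hW m (by omega)]
            exact le_cser (by simp only [Finset.mem_Icc]; omega) hx
          have hb : Amap r V W y - y ∈ cser r W (n + 1) := Amap_sub_mem hV hW hn hy
          have h := bracket_cser hW (by omega) (by omega) ha hb
          rwa [show m + (n + 1) = m + n + 1 by omega] at h
      have hd : Amap r V W ⁅x, y⁆ - ⁅Amap r V W x, Amap r V W y⁆ ∈ cser r W (m + n + 1) := by
        have h := sub_mem h1 h2
        rwa [sub_sub_sub_cancel_right] at h
      have hdW : Amap r V W ⁅x, y⁆ - ⁅Amap r V W x, Amap r V W y⁆ ∈ W (m + n) := by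
        refine sub_mem (Amap_mem_W hV hW hmem hxy) ?_
        have h := bracket_graded hW m (by omega) n (by omega) _
          (by rwa [Vb_eq hm'.2]) _ (by rwa [Vb_eq hn'.2])
        rwa [Vb_eq hmn] at h
      have h0 := (disjoint_cser_succ hW hmem).le_bot (Submodule.mem_inf.mpr ⟨hdW, hd⟩)
      rw [Submodule.mem_bot] at h0
      exact sub_eq_zero.mp h0
    · have hb : ⁅x, y⁆ ∈ cser r V (m + n) :=
        bracket_cser hV (by omega) (by omega)
          (le_cser (by simp only [Finset.mem_Icc]; omega) hx)
          (le_cser (by simp only [Finset.mem_Icc]; omega) hy)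
      rw [cser_bot (by omega)] at hb
      have hb' : ⁅Amap r V W x, Amap r V W y⁆ ∈ cser r W (m + n) :=
        bracket_cser hW (by omega) (by omega)
          (le_cser (by simp only [Finset.mem_Icc]; omega) hAx)
          (le_cser (by simp only [Finset.mem_Icc]; omega) hAy)
      rw [cser_bot (by omega)] at hb'
      rw [Submodule.mem_bot] at hb hb'
      rw [hb, map_zero, hb']
  have hx : x ∈ cser r V 1 := by rw [cser_one hV]; trivial
  have hy : y ∈ cser r V 1 := by rw [cser_one hV]; trivial
  refine cser_induction (C := fun x => ∀ y ∈ cser r V 1,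
    Amap r V W ⁅x, y⁆ = ⁅Amap r V W x, Amap r V W y⁆) hx ?_ ?_ ?_ y hy
  · intro m hm z hz y' hy'
    refine cser_induction (C := fun y' =>
      Amap r V W ⁅z, y'⁆ = ⁅Amap r V W z, Amap r V W y'⁆) hy' ?_ ?_ ?_
    · intro n hn w hw
      exact piece m hm n hn z hz w hw
    · simp
    · intro a b h1 h2
      rw [lie_add, map_add, map_add, lie_add, h1, h2]
  · intro y' _; simp
  · intro a b h1 h2 y' hy'
    rw [add_lie, map_add, map_add, add_lie, h1 _ hy', h2 _ hy']

lemma finrank_V_eq_W [FiniteDimensional ℝ g] {k : ℕ} (hk : k ∈ Finset.Icc 1 r) :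
    finrank ℝ (V k) = finrank ℝ (W k) := by
  have hk' := Finset.mem_Icc.mp hk
  have h1 := finrank_cser hV hk
  have h2 := finrank_cser hW hk
  rw [cser_eq hV hW k (by omega), cser_eq hV hW (k + 1) (by omega)] at h1
  omega

lemma Amap_map [FiniteDimensional ℝ g] {i : ℕ} (hi : i ∈ Finset.Icc 1 r) :
    (V i).map (Amap r V W) = W i := by
  have hinj := Amap_inj hV hW
  have hbij : Function.Bijective (Amap r V W) :=
    ⟨hinj, (LinearMap.injective_iff_surjective).mp hinj⟩
  have hle : (V i).map (Amap r V W) ≤ W i := by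
    rw [Submodule.map_le_iff_le_comap]
    intro x hx
    exact Amap_mem_W hV hW hi hx
  have h1 : finrank ℝ ((V i).map (Amap r V W)) = finrank ℝ (V i) :=
    LinearEquiv.finrank_map_eq (LinearEquiv.ofBijective _ hbij) (V i)
  refine Submodule.eq_of_le_of_finrank_le hle ?_
  rw [h1, finrank_V_eq_W hV hW hi]

end Auto

end StratAux

/-- If a Lie algebra admits two stratifications `g = V 1 ⊕ ⋯ ⊕ V r = W 1 ⊕ ⋯ ⊕ W s`,
then `r = s` and there is a Lie algebra automorphism `A` of `g` with `A (V i) = W i`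
for all `i`; consequently the homogeneous dimension `Q = ∑ i · dim (V i)` does not
depend on the stratification. -/
theorem stratification_unique_up_to_automorphism
    (g : Type*) [LieRing g] [LieAlgebra ℝ g] [FiniteDimensional ℝ g]
    (r s : ℕ) (V W : ℕ → Submodule ℝ g)
    (hV : IsStratification g r V) (hW : IsStratification g s W) :
    r = s ∧
    (∃ A : g ≃ₗ⁅ℝ⁆ g, ∀ i, 1 ≤ i → i ≤ r → (V i).map (A : g →ₗ[ℝ] g) = W i) ∧
    ∑ i ∈ Finset.Icc 1 r, i * finrank ℝ (V i) = ∑ i ∈ Finset.Icc 1 s, i * finrank ℝ (W i) := by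
  have hrs : r = s := le_antisymm (StratAux.steps_le hV hW) (StratAux.steps_le hW hV)
  subst hrs
  have hinj := StratAux.Amap_inj hV hW
  have hbij : Function.Bijective (StratAux.Amap r V W) :=
    ⟨hinj, (LinearMap.injective_iff_surjective).mp hinj⟩
  let E := LinearEquiv.ofBijective (StratAux.Amap r V W) hbij
  let A : g ≃ₗ⁅ℝ⁆ g :=
    { toLinearMap := StratAux.Amap r V W
      map_lie' := fun {x y} => StratAux.Amap_lie hV hW x y
      invFun := E.symm
      left_inv := E.left_inv
      right_inv := E.right_inv }
  refine ⟨rfl, ⟨A, ?_⟩, ?_⟩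
  · intro i h1 hir
    have h : (A : g →ₗ[ℝ] g) = StratAux.Amap r V W := rfl
    rw [h]
    exact StratAux.Amap_map hV hW (Finset.mem_Icc.mpr ⟨h1, hir⟩)
  · exact Finset.sum_congr rfl fun k hk => by
      rw [StratAux.finrank_V_eq_W hV hW hk]
end

section
/- Let ∗: ℝ^d × ℝ^d → ℝ^d be a product of the form z ∗ w = z + w + F(z,w) where F_1 is constant and each F_i (i ≥ 2) is continuous depending only on z_1,…,z_{i-1}, w_1,…,w_{i-1}. Let A = I × Ã and B = J × B̃ where I, J are compact intervals in ℝ and Ã, B̃ ⊂ ℝ^{d-1} are measurable. Then there exist z'_1 ∈ I and w'_1 ∈ J such that |A ∗ B| ≥ |I + J| · L^{d-1}(Ã ∗̃ B̃), where ∗̃ is the product on ℝ^{d-1} given by z̃ ∗̃ w̃ = z̃ + w̃ + (F_2,…,F_d)((z'_1, z̃), (w'_1, w̃)). Moreover, if F does not depend on z_1, w_1, equality holds. -/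
open MeasureTheory Set
open scoped Pointwise ENNReal

lemma exists_decomp' {a b a' b' s : ℝ} (hab : a ≤ b) (hab' : a' ≤ b')
    (h1 : a + a' ≤ s) (h2 : s ≤ b + b') :
    ∃ z ∈ Icc a b, ∃ w ∈ Icc a' b', z + w = s := by
  refine ⟨max a (s - b'), ⟨le_max_left _ _, max_le hab (by linarith)⟩,
    s - max a (s - b'), ⟨?_, ?_⟩, by ring⟩
  · have h3 : max a (s - b') ≤ s - a' := max_le (by linarith) (by linarith)
    linarith
  · have h4 : s - b' ≤ max a (s - b') := le_max_right _ _
    linarith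

lemma Icc_add_Icc' {a b a' b' : ℝ} (hab : a ≤ b) (hab' : a' ≤ b') :
    Icc a b + Icc a' b' = Icc (a + a') (b + b') := by
  ext x
  simp only [Set.mem_add, Set.mem_Icc]
  constructor
  · rintro ⟨y, ⟨hy1, hy2⟩, z, ⟨hz1, hz2⟩, rfl⟩
    constructor <;> linarith
  · rintro ⟨h1, h2⟩
    obtain ⟨y, hy, z, hz, hyz⟩ := exists_decomp' hab hab' h1 h2
    exact ⟨y, ⟨hy.1, hy.2⟩, z, ⟨hz.1, hz.2⟩, hyz⟩

/-- Key lemma: for a triangular product `z ∗ w = z + w + F z w` on `ℝ × ℝ^{d-1}`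
(`F₁` constant, each `F_i`, `i ≥ 2`, continuous and depending only on the previous
coordinates of `z` and `w`) and sets `A = I × Ã`, `B = J × B̃` with `I, J` compact
intervals and `Ã, B̃` measurable, there are `z₁' ∈ I`, `w₁' ∈ J` with
`|A ∗ B| ≥ |I + J| ⋅ L^{d-1}(Ã ∗̃ B̃)`, where `z̃ ∗̃ w̃ = z̃ + w̃ + (F₂,…,F_d)((z₁',z̃),(w₁',w̃))`.
Moreover, if `F` does not depend on `z₁, w₁`, equality holds. -/
theorem slicing_lemma_triangular_product (m : ℕ)
    (F : ℝ × (Fin m → ℝ) → ℝ × (Fin m → ℝ) → ℝ × (Fin m → ℝ))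
    (hFcont : Continuous fun p : (ℝ × (Fin m → ℝ)) × (ℝ × (Fin m → ℝ)) => F p.1 p.2)
    -- the first component of `F` is constant:
    (hF1 : ∀ z w z' w', (F z w).1 = (F z' w').1)
    -- the `i`-th component of the second block depends only on the first coordinate
    -- and the previous coordinates of the second block:
    (hFtri : ∀ (i : Fin m) (z w z' w' : ℝ × (Fin m → ℝ)), z.1 = z'.1 → w.1 = w'.1 →
      (∀ j : Fin m, (j : ℕ) < (i : ℕ) → z.2 j = z'.2 j ∧ w.2 j = w'.2 j) →
      (F z w).2 i = (F z' w').2 i)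
    (a b a' b' : ℝ) (hab : a ≤ b) (hab' : a' ≤ b')
    (At Bt : Set (Fin m → ℝ)) (hAt : MeasurableSet At) (hBt : MeasurableSet Bt) :
    ∃ z₁' ∈ Icc a b, ∃ w₁' ∈ Icc a' b',
      (volume (image2 (fun z w => z + w + F z w) (Icc a b ×ˢ At) (Icc a' b' ×ˢ Bt)) ≥
        volume (Icc a b + Icc a' b') *
          volume (image2 (fun zt wt : Fin m → ℝ => zt + wt + (F (z₁', zt) (w₁', wt)).2) At Bt)) ∧
      ((∀ (z w : ℝ × (Fin m → ℝ)) (c c' : ℝ), F z w = F (c, z.2) (c', w.2)) →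
        volume (image2 (fun z w => z + w + F z w) (Icc a b ×ˢ At) (Icc a' b' ×ˢ Bt)) =
          volume (Icc a b + Icc a' b') *
            volume (image2 (fun zt wt : Fin m → ℝ => zt + wt + (F (z₁', zt) (w₁', wt)).2) At Bt)) := by
  classical
  set κ : ℝ := (F 0 0).1 with hκdef
  have hκ : ∀ z w, (F z w).1 = κ := fun z w => hF1 z w 0 0
  set S : Set (ℝ × (Fin m → ℝ)) :=
    image2 (fun z w => z + w + F z w) (Icc a b ×ˢ At) (Icc a' b' ×ˢ Bt) with hSdef
  set L : ℝ≥0∞ := volume (Icc a b + Icc a' b') with hLdef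
  set g : ℝ → ℝ → ℝ≥0∞ := fun z₁ w₁ =>
    volume (image2 (fun zt wt : Fin m → ℝ => zt + wt + (F (z₁, zt) (w₁, wt)).2) At Bt) with hgdef
  -- membership of fibers in S
  have fiber_sub : ∀ z₁ ∈ Icc a b, ∀ w₁ ∈ Icc a' b',
      ∀ x ∈ image2 (fun zt wt : Fin m → ℝ => zt + wt + (F (z₁, zt) (w₁, wt)).2) At Bt,
      (z₁ + w₁ + κ, x) ∈ S := by
    rintro z₁ hz₁ w₁ hw₁ x ⟨zt, hzt, wt, hwt, rfl⟩
    refine ⟨(z₁, zt), ⟨hz₁, hzt⟩, (w₁, wt), ⟨hw₁, hwt⟩, ?_⟩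
    refine Prod.ext ?_ rfl
    simp [Prod.fst_add, hκ]
  have hL : L = ENNReal.ofReal (b + b' - (a + a')) := by
    rw [hLdef, Icc_add_Icc' hab hab', Real.volume_Icc]
  -- the main inequality
  have key : ∃ z₁' ∈ Icc a b, ∃ w₁' ∈ Icc a' b', volume S ≥ L * g z₁' w₁' := by
    by_contra hcon
    push_neg at hcon
    have ha : a ∈ Icc a b := ⟨le_refl a, hab⟩
    have ha' : a' ∈ Icc a' b' := ⟨le_refl a', hab'⟩
    have hVtop : volume S ≠ ⊤ := (lt_of_lt_of_le (hcon a ha a' ha') le_top).ne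
    have hL0 : L ≠ 0 := by
      intro h0
      have := hcon a ha a' ha'
      rw [h0, zero_mul] at this
      simp at this
    have hLtop : L ≠ ⊤ := by rw [hL]; exact ENNReal.ofReal_ne_top
    set c : ℝ≥0∞ := volume S / L with hcdef
    have hc_lt : ∀ z₁ ∈ Icc a b, ∀ w₁ ∈ Icc a' b', c < g z₁ w₁ := by
      intro z₁ hz₁ w₁ hw₁
      rw [hcdef, ENNReal.div_lt_iff (Or.inl hL0) (Or.inl hLtop), mul_comm]
      exact hcon z₁ hz₁ w₁ hw₁
    have hcL : c * L = volume S := ENNReal.div_mul_cancel hL0 hLtop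
    -- measurable hull
    obtain ⟨T, hST, hTmeas, hTvol⟩ : ∃ T, S ⊆ T ∧ MeasurableSet T ∧ volume T = volume S :=
      ⟨toMeasurable volume S, subset_toMeasurable _ _, measurableSet_toMeasurable _ _,
        measure_toMeasurable _⟩
    set h : ℝ → ℝ≥0∞ := fun t => volume (Prod.mk t ⁻¹' T) with hhdef
    have hmeas : Measurable h := measurable_measure_prodMk_left hTmeas
    have hVeq : volume S = ∫⁻ t, h t := by
      rw [← hTvol, Measure.volume_eq_prod, Measure.prod_apply hTmeas]
    -- slice lower bounds
    have hslice : ∀ t ∈ Ioo (a + a' + κ) (b + b' + κ), c < h t := by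
      intro t ht
      obtain ⟨z₁, hz₁, w₁, hw₁, hzw⟩ :=
        exists_decomp' hab hab' (show a + a' ≤ t - κ by have := ht.1; linarith)
          (show t - κ ≤ b + b' by have := ht.2; linarith)
      refine lt_of_lt_of_le (hc_lt z₁ hz₁ w₁ hw₁) ?_
      refine le_trans (measure_mono ?_) (measure_mono (preimage_mono hST))
      intro x hx
      have hmem := fiber_sub z₁ hz₁ w₁ hw₁ x hx
      have : z₁ + w₁ + κ = t := by linarith
      rwa [this] at hmem
    -- strict lintegral inequality
    have hIoo : volume (Ioo (a + a' + κ) (b + b' + κ)) = L := by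
      rw [Real.volume_Ioo, hL]
      congr 1
      ring
    have hIoo0 : volume (Ioo (a + a' + κ) (b + b' + κ)) ≠ 0 := by rw [hIoo]; exact hL0
    have hconst : (∫⁻ _ in Ioo (a + a' + κ) (b + b' + κ), c) = volume S := by
      rw [setLIntegral_const, hIoo, hcL]
    have hstrict : (∫⁻ _ in Ioo (a + a' + κ) (b + b' + κ), c) <
        ∫⁻ t in Ioo (a + a' + κ) (b + b' + κ), h t := by
      refine setLIntegral_strict_mono measurableSet_Ioo hIoo0 hmeas ?_ ?_
      · rw [hconst]; exact hVtop
      · exact ae_of_all _ hslice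
    have hfinal : volume S < volume S := by
      calc volume S = ∫⁻ _ in Ioo (a + a' + κ) (b + b' + κ), c := hconst.symm
        _ < ∫⁻ t in Ioo (a + a' + κ) (b + b' + κ), h t := hstrict
        _ ≤ ∫⁻ t, h t := setLIntegral_le_lintegral _ _
        _ = volume S := hVeq.symm
    exact lt_irrefl _ hfinal
  obtain ⟨z₁', hz₁', w₁', hw₁', hineq⟩ := key
  refine ⟨z₁', hz₁', w₁', hw₁', hineq, ?_⟩
  -- equality case
  intro hyp
  have hF2 : ∀ (z w : ℝ × (Fin m → ℝ)), (F z w).2 = (F (z₁', z.2) (w₁', w.2)).2 := by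
    intro z w
    rw [hyp z w z₁' w₁']
  have hSeq : S = Icc (a + a' + κ) (b + b' + κ) ×ˢ
      image2 (fun zt wt : Fin m → ℝ => zt + wt + (F (z₁', zt) (w₁', wt)).2) At Bt := by
    ext ⟨t, x⟩
    constructor
    · rintro ⟨z, ⟨hz1, hz2⟩, w, ⟨hw1, hw2⟩, heq⟩
      have ht : t = z.1 + w.1 + κ := by
        have := congrArg Prod.fst heq
        simp only [Prod.fst_add] at this
        rw [← this, hκ]
      have hx : x = z.2 + w.2 + (F (z₁', z.2) (w₁', w.2)).2 := by
        have := congrArg Prod.snd heq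
        simp only [Prod.snd_add] at this
        rw [← this, hF2]
      refine ⟨?_, ?_⟩
      · show t ∈ Icc (a + a' + κ) (b + b' + κ)
        rw [ht]
        exact ⟨by have := hz1.1; have := hw1.1; linarith,
               by have := hz1.2; have := hw1.2; linarith⟩
      · exact ⟨z.2, hz2, w.2, hw2, hx.symm⟩
    · rintro ⟨ht, zt, hzt, wt, hwt, rfl⟩
      obtain ⟨z₁, hz₁, w₁, hw₁, hzw⟩ :=
        exists_decomp' hab hab' (show a + a' ≤ t - κ by have := ht.1; linarith)
          (show t - κ ≤ b + b' by have := ht.2; linarith)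
      refine ⟨(z₁, zt), ⟨hz₁, hzt⟩, (w₁, wt), ⟨hw₁, hwt⟩, ?_⟩
      refine Prod.ext ?_ ?_
      · simp only [Prod.fst_add]
        rw [hκ]
        linarith
      · simp only [Prod.snd_add]
        rw [hF2 (z₁, zt) (w₁, wt)]
  rw [hSeq, Measure.volume_eq_prod, Measure.prod_prod]
  congr 1
  rw [hL, Real.volume_Icc]
  congr 1
  ring
end

section
/- In the case of rectangles, for a triangular product ∗ as above and A = I_1 × ⋯ × I_d, B = J_1 × ⋯ × J_d products of compact intervals, one has |A ∗ B| ≥ |I_1 + J_1| ⋯ |I_d + J_d| = |A + B|, i.e., the ∗-product of rectangles has measure at least that of their Minkowski sum. -/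
open MeasureTheory Set
open scoped Pointwise ENNReal

private lemma triangular_key (n : ℕ) :
    ∀ (F : (Fin n → ℝ) → (Fin n → ℝ) → (Fin n → ℝ)),
    Continuous (fun p : (Fin n → ℝ) × (Fin n → ℝ) => F p.1 p.2) →
    (∀ (i : Fin n) (z w z' w' : Fin n → ℝ),
      (∀ j : Fin n, (j : ℕ) < (i : ℕ) → z j = z' j ∧ w j = w' j) →
      F z w i = F z' w' i) →
    ∀ (a b a' b' : Fin n → ℝ), (∀ i, a i ≤ b i) → (∀ i, a' i ≤ b' i) →
    ∏ i, ENNReal.ofReal ((b i - a i) + (b' i - a' i)) ≤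
      volume (image2 (fun z w => z + w + F z w)
        (univ.pi fun i => Icc (a i) (b i)) (univ.pi fun i => Icc (a' i) (b' i))) := by
  induction n with
  | zero =>
    intro F _ _ a b a' b' _ _
    have hne : (image2 (fun z w => z + w + F z w)
        (univ.pi fun i => Icc (a i) (b i)) (univ.pi fun i => Icc (a' i) (b' i))).Nonempty := by
      refine ⟨a + a' + F a a', mem_image2_of_mem ?_ ?_⟩ <;> exact fun i _ => i.elim0
    have huniv : (image2 (fun z w => z + w + F z w)
        (univ.pi fun i => Icc (a i) (b i)) (univ.pi fun i => Icc (a' i) (b' i))) = univ := by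
      obtain ⟨y, hy⟩ := hne
      refine eq_univ_of_forall fun x => ?_
      rwa [Subsingleton.elim x y]
    rw [huniv]
    have : (univ : Set (Fin 0 → ℝ)) = univ.pi fun _ : Fin 0 => (univ : Set ℝ) := by
      simp
    rw [this, volume_pi_pi]
    simp
  | succ n ih =>
    intro F hFcont hFtri a b a' b' hab hab'
    set f : (Fin (n+1) → ℝ) → (Fin (n+1) → ℝ) → (Fin (n+1) → ℝ) :=
      fun z w => z + w + F z w with hf
    set F' : (Fin n → ℝ) → (Fin n → ℝ) → (Fin n → ℝ) :=
      fun z w i => F (Fin.snoc z 0) (Fin.snoc w 0) i.castSucc with hF'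
    set c : (Fin n → ℝ) → (Fin n → ℝ) → ℝ :=
      fun z w => F (Fin.snoc z 0) (Fin.snoc w 0) (Fin.last n) with hc
    -- agreement with snoc of init
    have hagree : ∀ (z : Fin (n+1) → ℝ) (j : Fin (n+1)), (j : ℕ) < n →
        z j = Fin.snoc (Fin.init z) (0 : ℝ) j := by
      intro z j hj
      have hje : j = Fin.castSucc ⟨(j : ℕ), hj⟩ := by ext; simp
      rw [hje, Fin.snoc_castSucc]
      rfl
    have hFcast : ∀ (z w : Fin (n+1) → ℝ) (i : Fin n),
        F z w i.castSucc = F' (Fin.init z) (Fin.init w) i := by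
      intro z w i
      refine hFtri i.castSucc z w _ _ fun j hj => ?_
      have hj' : (j : ℕ) < n := by
        have h1 : (j : ℕ) < (i : ℕ) := by simpa using hj
        exact h1.trans_le i.isLt.le
      exact ⟨hagree z j hj', hagree w j hj'⟩
    have hFlast : ∀ (z w : Fin (n+1) → ℝ),
        F z w (Fin.last n) = c (Fin.init z) (Fin.init w) := by
      intro z w
      refine hFtri (Fin.last n) z w _ _ fun j hj => ?_
      have hj' : (j : ℕ) < n := by simpa using hj
      exact ⟨hagree z j hj', hagree w j hj'⟩
    -- continuity of snoc
    have hsnoc_cont : Continuous fun z : Fin n → ℝ => (Fin.snoc z (0 : ℝ) : Fin (n+1) → ℝ) := by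
      apply continuous_pi
      intro j
      refine Fin.lastCases ?_ (fun i => ?_) j
      · simp only [Fin.snoc_last]; exact continuous_const
      · simp only [Fin.snoc_castSucc]; exact continuous_apply i
    have hF'cont : Continuous fun p : (Fin n → ℝ) × (Fin n → ℝ) => F' p.1 p.2 := by
      apply continuous_pi
      intro i
      exact (continuous_apply (Fin.castSucc i)).comp
        (hFcont.comp ((hsnoc_cont.comp continuous_fst).prodMk (hsnoc_cont.comp continuous_snd)))
    have hF'tri : ∀ (i : Fin n) (z w z' w' : Fin n → ℝ),
        (∀ j : Fin n, (j : ℕ) < (i : ℕ) → z j = z' j ∧ w j = w' j) →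
        F' z w i = F' z' w' i := by
      intro i z w z' w' h
      refine hFtri i.castSucc _ _ _ _ fun j hj => ?_
      have hj0 : (j : ℕ) < (i : ℕ) := by simpa using hj
      have hj' : (j : ℕ) < n := hj0.trans_le i.isLt.le
      have hje : j = Fin.castSucc ⟨(j : ℕ), hj'⟩ := by ext; simp
      rw [hje, Fin.snoc_castSucc, Fin.snoc_castSucc, Fin.snoc_castSucc, Fin.snoc_castSucc]
      exact h _ hj0
    -- sets
    set A : Set (Fin (n+1) → ℝ) := univ.pi fun i => Icc (a i) (b i) with hA
    set B : Set (Fin (n+1) → ℝ) := univ.pi fun i => Icc (a' i) (b' i) with hB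
    set S : Set (Fin (n+1) → ℝ) := image2 f A B with hS
    set f' : (Fin n → ℝ) → (Fin n → ℝ) → (Fin n → ℝ) := fun z w => z + w + F' z w with hf'
    set A' : Set (Fin n → ℝ) := univ.pi fun i => Icc (Fin.init a i) (Fin.init b i) with hA'
    set B' : Set (Fin n → ℝ) := univ.pi fun i => Icc (Fin.init a' i) (Fin.init b' i) with hB'
    set S' : Set (Fin n → ℝ) := image2 f' A' B' with hS'
    have hScompact : IsCompact S := by
      have hAc : IsCompact A := isCompact_univ_pi fun i => isCompact_Icc
      have hBc : IsCompact B := isCompact_univ_pi fun i => isCompact_Icc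
      have hrw : S = (fun p : _ × _ => f p.1 p.2) '' (A ×ˢ B) := by
        rw [hS, ← Set.image_uncurry_prod]; rfl
      rw [hrw]
      exact (hAc.prod hBc).image ((continuous_fst.add continuous_snd).add hFcont)
    have hS'compact : IsCompact S' := by
      have hAc : IsCompact A' := isCompact_univ_pi fun i => isCompact_Icc
      have hBc : IsCompact B' := isCompact_univ_pi fun i => isCompact_Icc
      have hrw : S' = (fun p : _ × _ => f' p.1 p.2) '' (A' ×ˢ B') := by
        rw [hS', ← Set.image_uncurry_prod]; rfl
      rw [hrw]
      exact (hAc.prod hBc).image ((continuous_fst.add continuous_snd).add hF'cont)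
    -- the projection map
    set π : (Fin (n+1) → ℝ) → (Fin n → ℝ) × ℝ :=
      fun x => (Fin.init x, x (Fin.last n)) with hπ
    have hπcont : Continuous π :=
      (continuous_pi fun i => continuous_apply _).prodMk (continuous_apply _)
    have hπeq : π = Prod.swap ∘
        (MeasurableEquiv.piFinSuccAbove (fun _ : Fin (n+1) => ℝ) (Fin.last n)) := by
      funext x
      refine Prod.ext ?_ ?_
      · show Fin.init x = (fun j => x ((Fin.last n).succAbove j))
        funext j
        simp [Fin.init, Fin.succAbove_last]
      · rfl
    have hπinj : Function.Injective π := by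
      rw [hπeq]
      exact Prod.swap_injective.comp
        (MeasurableEquiv.piFinSuccAbove (fun _ : Fin (n+1) => ℝ) (Fin.last n)).injective
    have hπmp : MeasurePreserving π volume
        ((volume : Measure (Fin n → ℝ)).prod (volume : Measure ℝ)) := by
      rw [hπeq]
      exact (Measure.measurePreserving_swap).comp
        (volume_preserving_piFinSuccAbove (fun _ : Fin (n+1) => ℝ) (Fin.last n))
    have hTm : MeasurableSet (π '' S) := (hScompact.image hπcont).measurableSet
    have hvol : volume S = (volume.prod volume) (π '' S) := by
      rw [← hπmp.measure_preimage hTm.nullMeasurableSet, Set.preimage_image_eq S hπinj]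
    -- slice lower bound
    set L : ℝ≥0∞ := ENNReal.ofReal
      ((b (Fin.last n) - a (Fin.last n)) + (b' (Fin.last n) - a' (Fin.last n))) with hL
    have hslice : ∀ x ∈ S', L ≤ volume (Prod.mk x ⁻¹' (π '' S)) := by
      rintro x ⟨z', hz', w', hw', rfl⟩
      set cv : ℝ := c z' w' with hcv
      have hsub : Icc (a (Fin.last n) + a' (Fin.last n) + cv)
          (b (Fin.last n) + b' (Fin.last n) + cv) ⊆ Prod.mk (f' z' w') ⁻¹' (π '' S) := by
        intro t ht
        have ht' : t - cv ∈ Icc (a (Fin.last n)) (b (Fin.last n)) +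
            Icc (a' (Fin.last n)) (b' (Fin.last n)) := by
          rw [Icc_add_Icc (hab _) (hab' _)]
          obtain ⟨h1, h2⟩ := ht
          constructor <;> linarith
        obtain ⟨s, hs, u, hu, hsu⟩ := ht'
        have hzA : Fin.snoc z' s ∈ A := by
          intro j _
          induction j using Fin.lastCases with
          | last => rw [Fin.snoc_last]; exact hs
          | cast i => rw [Fin.snoc_castSucc]; exact hz' i (mem_univ i)
        have hwB : Fin.snoc w' u ∈ B := by
          intro j _
          induction j using Fin.lastCases with
          | last => rw [Fin.snoc_last]; exact hu
          | cast i => rw [Fin.snoc_castSucc]; exact hw' i (mem_univ i)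
        refine ⟨f (Fin.snoc z' s) (Fin.snoc w' u), mem_image2_of_mem hzA hwB, ?_⟩
        have h1 : Fin.init (f (Fin.snoc z' s) (Fin.snoc w' u)) = f' z' w' := by
          funext i
          show (f (Fin.snoc z' s) (Fin.snoc w' u)) i.castSucc = f' z' w' i
          have := hFcast (Fin.snoc z' s) (Fin.snoc w' u) i
          rw [Fin.init_snoc, Fin.init_snoc] at this
          simp only [hf, Pi.add_apply, Fin.snoc_castSucc, this, hf']
        have h2 : (f (Fin.snoc z' s) (Fin.snoc w' u)) (Fin.last n) = t := by
          have := hFlast (Fin.snoc z' s) (Fin.snoc w' u)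
          rw [Fin.init_snoc, Fin.init_snoc] at this
          have hsu' : s + u = t - cv := hsu
          simp only [hf, Pi.add_apply, Fin.snoc_last, this, ← hcv]
          linarith
        show π _ = _
        rw [hπ]
        exact Prod.ext h1 h2
      calc L = volume (Icc (a (Fin.last n) + a' (Fin.last n) + cv)
            (b (Fin.last n) + b' (Fin.last n) + cv)) := by
            rw [Real.volume_Icc, hL]; congr 1; ring
        _ ≤ volume (Prod.mk (f' z' w') ⁻¹' (π '' S)) := measure_mono hsub
    -- put it together
    have hS'm : MeasurableSet S' := hS'compact.measurableSet
    have hih := ih F' hF'cont hF'tri (Fin.init a) (Fin.init b) (Fin.init a') (Fin.init b')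
      (fun i => hab _) (fun i => hab' _)
    calc ∏ i : Fin (n+1), ENNReal.ofReal ((b i - a i) + (b' i - a' i))
        = (∏ i : Fin n, ENNReal.ofReal
            ((b i.castSucc - a i.castSucc) + (b' i.castSucc - a' i.castSucc))) * L := by
          rw [hL, Fin.prod_univ_castSucc]
      _ ≤ volume S' * L := by
          refine mul_le_mul' ?_ le_rfl
          exact hih
      _ = ∫⁻ x, S'.indicator (fun _ => L) x := by
          rw [lintegral_indicator_const hS'm, mul_comm]
      _ ≤ ∫⁻ x, volume (Prod.mk x ⁻¹' (π '' S)) := by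
          refine lintegral_mono fun x => ?_
          by_cases hx : x ∈ S'
          · rw [Set.indicator_of_mem hx]; exact hslice x hx
          · rw [Set.indicator_of_notMem hx]; exact zero_le
      _ = (volume.prod volume) (π '' S) := (Measure.prod_apply hTm).symm
      _ = volume S := hvol.symm

/-- For a triangular product `z ∗ w = z + w + F z w` on `ℝ^d` and rectangles
`A = I_1 × ⋯ × I_d`, `B = J_1 × ⋯ × J_d` (products of compact intervals), one has
`|A ∗ B| ≥ |I_1 + J_1| ⋯ |I_d + J_d| = |A + B|`: the `∗`-product of rectangles has
measure at least that of their Minkowski sum. -/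
theorem triangular_product_rectangles (d : ℕ)
    (F : (Fin d → ℝ) → (Fin d → ℝ) → (Fin d → ℝ))
    (hFcont : Continuous fun p : (Fin d → ℝ) × (Fin d → ℝ) => F p.1 p.2)
    -- `F i` depends only on the coordinates `z j`, `w j` for `j < i`
    -- (in particular `F 0` is constant):
    (hFtri : ∀ (i : Fin d) (z w z' w' : Fin d → ℝ),
      (∀ j : Fin d, (j : ℕ) < (i : ℕ) → z j = z' j ∧ w j = w' j) →
      F z w i = F z' w' i)
    (a b a' b' : Fin d → ℝ) (hab : ∀ i, a i ≤ b i) (hab' : ∀ i, a' i ≤ b' i)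
    (A B : Set (Fin d → ℝ))
    (hA : A = univ.pi fun i => Icc (a i) (b i))
    (hB : B = univ.pi fun i => Icc (a' i) (b' i)) :
    volume (image2 (fun z w => z + w + F z w) A B) ≥
      ∏ i : Fin d, volume (Icc (a i) (b i) + Icc (a' i) (b' i)) ∧
    ∏ i : Fin d, volume (Icc (a i) (b i) + Icc (a' i) (b' i)) = volume (A + B) := by
  have hIcc : ∀ i, Icc (a i) (b i) + Icc (a' i) (b' i)
      = Icc (a i + a' i) (b i + b' i) := fun i => Icc_add_Icc (hab i) (hab' i)
  have hprod : ∏ i : Fin d, volume (Icc (a i) (b i) + Icc (a' i) (b' i))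
      = ∏ i : Fin d, ENNReal.ofReal ((b i - a i) + (b' i - a' i)) := by
    refine Finset.prod_congr rfl fun i _ => ?_
    rw [hIcc i, Real.volume_Icc]
    congr 1; ring
  constructor
  · rw [ge_iff_le, hprod, hA, hB]
    exact triangular_key d F hFcont hFtri a b a' b' hab hab'
  · have hABsum : A + B = univ.pi fun i => Icc (a i + a' i) (b i + b' i) := by
      rw [hA, hB]
      ext x
      simp only [Set.mem_add, Set.mem_univ_pi]
      constructor
      · rintro ⟨y, hy, z, hz, rfl⟩ i
        exact ⟨add_le_add (hy i).1 (hz i).1, add_le_add (hy i).2 (hz i).2⟩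
      · intro h
        have h' : ∀ i, ∃ s ∈ Icc (a i) (b i), ∃ u ∈ Icc (a' i) (b' i), s + u = x i := by
          intro i
          have hx := h i
          rw [← hIcc i] at hx
          exact hx
        choose y hy z hz hyz using h'
        exact ⟨y, hy, z, hz, funext fun i => hyz i⟩
    rw [hABsum, volume_pi_pi]
    refine Finset.prod_congr rfl fun i _ => ?_
    rw [hIcc i]
end

section
/- If a ∈ ℝ^d is a Lebesgue density point of a measurable set A and b is a density point of B, then a + b = s satisfies that a is a density point of A ∩ (s - B); consequently |A ∩ (s - B)| > 0 for every s in the sumset of the density points, and the set of density points A° of A satisfies |A° + B°| ≥ |A| whenever |A| > 0. -/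
open MeasureTheory Set Filter
open scoped Pointwise ENNReal Topology

/-- `a` is a Lebesgue density point of `A ⊆ ℝ^d`:
`|A ∩ B(a,r)| / |B(a,r)| → 1` as `r → 0⁺`. -/
def IsDensityPoint {d : ℕ} (A : Set (Fin d → ℝ)) (a : Fin d → ℝ) : Prop :=
  Tendsto (fun r : ℝ => volume (A ∩ Metric.ball a r) / volume (Metric.ball a r))
    (𝓝[>] 0) (𝓝 1)

/-- The set `A°` of Lebesgue density points of `A`. -/
def densityPoints {d : ℕ} (A : Set (Fin d → ℝ)) : Set (Fin d → ℝ) :=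
  {a | IsDensityPoint A a}

section aux

variable {d : ℕ}

lemma ratio_eq_one_sub (S : Set (Fin d → ℝ)) (hS : MeasurableSet S) (a : Fin d → ℝ)
    {r : ℝ} (hr : 0 < r) :
    volume (S ∩ Metric.ball a r) / volume (Metric.ball a r)
      = 1 - volume (Metric.ball a r \ S) / volume (Metric.ball a r) := by
  have hv0 : volume (Metric.ball a r) ≠ 0 := (Metric.measure_ball_pos _ _ hr).ne'
  have hvt : volume (Metric.ball a r) ≠ ⊤ := measure_ball_lt_top.ne
  have hdt : volume (Metric.ball a r \ S) ≠ ⊤ :=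
    (lt_of_le_of_lt (measure_mono diff_subset) measure_ball_lt_top).ne
  have hsum : volume (Metric.ball a r ∩ S) + volume (Metric.ball a r \ S)
      = volume (Metric.ball a r) := measure_inter_add_diff _ hS
  have h1 : volume (S ∩ Metric.ball a r)
      = volume (Metric.ball a r) - volume (Metric.ball a r \ S) := by
    rw [Set.inter_comm]
    exact ENNReal.eq_sub_of_add_eq hdt hsum
  rw [h1, ENNReal.sub_div (fun _ _ => hv0), ENNReal.div_self hv0 hvt]

lemma ratio_diff_le_one (S : Set (Fin d → ℝ)) (a : Fin d → ℝ) {r : ℝ} (hr : 0 < r) :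
    volume (Metric.ball a r \ S) / volume (Metric.ball a r) ≤ 1 := by
  have hv0 : volume (Metric.ball a r) ≠ 0 := (Metric.measure_ball_pos _ _ hr).ne'
  have hvt : volume (Metric.ball a r) ≠ ⊤ := measure_ball_lt_top.ne
  calc volume (Metric.ball a r \ S) / volume (Metric.ball a r)
      ≤ volume (Metric.ball a r) / volume (Metric.ball a r) :=
        ENNReal.div_le_div_right (measure_mono diff_subset) _
    _ = 1 := ENNReal.div_self hv0 hvt

lemma diff_ratio_eq (S : Set (Fin d → ℝ)) (hS : MeasurableSet S) (a : Fin d → ℝ)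
    {r : ℝ} (hr : 0 < r) :
    volume (Metric.ball a r \ S) / volume (Metric.ball a r)
      = 1 - volume (S ∩ Metric.ball a r) / volume (Metric.ball a r) := by
  rw [ratio_eq_one_sub S hS a hr,
    ENNReal.sub_sub_cancel ENNReal.one_ne_top (ratio_diff_le_one S a hr)]

lemma dens_iff (S : Set (Fin d → ℝ)) (hS : MeasurableSet S) (a : Fin d → ℝ) :
    IsDensityPoint S a ↔
      Tendsto (fun r : ℝ => volume (Metric.ball a r \ S) / volume (Metric.ball a r))
        (𝓝[>] 0) (𝓝 0) := by
  constructor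
  · intro h
    have he : (fun r : ℝ => volume (Metric.ball a r \ S) / volume (Metric.ball a r))
        =ᶠ[𝓝[>] (0:ℝ)]
        fun r : ℝ => 1 - volume (S ∩ Metric.ball a r) / volume (Metric.ball a r) :=
      eventually_mem_nhdsWithin.mono fun r hr => diff_ratio_eq S hS a hr
    rw [tendsto_congr' he]
    simpa using ENNReal.Tendsto.sub (tendsto_const_nhds : Filter.Tendsto _ _ (𝓝 (1:ℝ≥0∞))) h
      (Or.inl ENNReal.one_ne_top)
  · intro h
    have he : (fun r : ℝ => volume (S ∩ Metric.ball a r) / volume (Metric.ball a r))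
        =ᶠ[𝓝[>] (0:ℝ)]
        fun r : ℝ => 1 - volume (Metric.ball a r \ S) / volume (Metric.ball a r) :=
      eventually_mem_nhdsWithin.mono fun r hr => ratio_eq_one_sub S hS a hr
    unfold IsDensityPoint
    rw [tendsto_congr' he]
    simpa using ENNReal.Tendsto.sub (tendsto_const_nhds : Filter.Tendsto _ _ (𝓝 (1:ℝ≥0∞))) h
      (Or.inl ENNReal.one_ne_top)

lemma measure_preimage_sub (s : Fin d → ℝ) (T : Set (Fin d → ℝ)) :
    volume ((fun y => s - y) ⁻¹' T) = volume T := by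
  have : (fun y : Fin d → ℝ => s - y) ⁻¹' T = Neg.neg ⁻¹' ((fun x => s + x) ⁻¹' T) := by
    ext x; simp [sub_eq_add_neg]
  rw [this, Measure.measure_preimage_neg, measure_preimage_add]

end aux

/-- If `a` is a density point of `A` and `b` is a density point of `B`, then with
`s = a + b`, the point `a` is a density point of `A ∩ (s - B)`; consequently
`|A ∩ (s - B)| > 0` for every `s` in the sumset `A° + B°` of the density points, and
`|A° + B°| ≥ |A|` whenever `|A| > 0` (and `|B| > 0`). -/
theorem density_points_sumset (d : ℕ) (hd : 0 < d)
    (A B : Set (Fin d → ℝ)) (hA : MeasurableSet A) (hB : MeasurableSet B) :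
    (∀ a b : Fin d → ℝ, IsDensityPoint A a → IsDensityPoint B b →
      IsDensityPoint (A ∩ ((fun y => (a + b) - y) '' B)) a) ∧
    (∀ s ∈ densityPoints A + densityPoints B,
      0 < volume (A ∩ ((fun y => s - y) '' B))) ∧
    (0 < volume A → 0 < volume B →
      volume A ≤ volume (densityPoints A + densityPoints B)) := by
  haveI : Nontrivial (Fin d → ℝ) := by
    refine ⟨0, 1, fun h => ?_⟩
    have := congrFun h ⟨0, hd⟩
    simp at this
  -- image = preimage for the involution
  have himg : ∀ (s : Fin d → ℝ), (fun y => s - y) '' B = (fun y => s - y) ⁻¹' B := by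
    intro s
    ext x
    simp only [Set.mem_image, Set.mem_preimage]
    constructor
    · rintro ⟨y, hy, rfl⟩; simpa [sub_sub_cancel] using hy
    · intro hx; exact ⟨s - x, hx, sub_sub_cancel s x⟩
  have hmeas : ∀ (s : Fin d → ℝ), MeasurableSet ((fun y => s - y) ⁻¹' B) := fun s =>
    hB.preimage (measurable_const.sub measurable_id)
  -- Part 1
  have part1 : ∀ a b : Fin d → ℝ, IsDensityPoint A a → IsDensityPoint B b →
      IsDensityPoint (A ∩ ((fun y => (a + b) - y) '' B)) a := by
    intro a b ha hb
    set s := a + b with hs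
    rw [himg s]
    set C := (fun y => s - y) ⁻¹' B with hC
    -- a is a density point of C
    have hCb : ∀ r : ℝ, (fun y : Fin d → ℝ => s - y) ⁻¹' Metric.ball b r = Metric.ball a r := by
      intro r
      ext x
      simp only [Set.mem_preimage, Metric.mem_ball, dist_eq_norm]
      have h1 : s - x - b = a - x := by rw [hs]; abel
      rw [h1, norm_sub_rev]
    have hCa : IsDensityPoint C a := by
      have heq : ∀ r : ℝ,
          volume (C ∩ Metric.ball a r) / volume (Metric.ball a r)
            = volume (B ∩ Metric.ball b r) / volume (Metric.ball b r) := by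
        intro r
        have h1 : C ∩ Metric.ball a r = (fun y => s - y) ⁻¹' (B ∩ Metric.ball b r) := by
          rw [Set.preimage_inter, hCb r]
        have h2 : volume (Metric.ball a r) = volume (Metric.ball b r) := by
          rw [Measure.addHaar_ball_center volume a, Measure.addHaar_ball_center volume b]
        rw [h1, measure_preimage_sub, h2]
      unfold IsDensityPoint
      simpa only [heq, IsDensityPoint] using hb
    -- intersect the two density points
    rw [dens_iff _ (hA.inter (hmeas s))]
    have hA' := (dens_iff A hA a).1 ha
    have hC' := (dens_iff C (hmeas s) a).1 hCa
    have hsum : Tendsto (fun r : ℝ =>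
        volume (Metric.ball a r \ A) / volume (Metric.ball a r)
          + volume (Metric.ball a r \ C) / volume (Metric.ball a r)) (𝓝[>] 0) (𝓝 0) := by
      simpa using hA'.add hC'
    refine tendsto_of_tendsto_of_tendsto_of_le_of_le tendsto_const_nhds hsum
      (fun r => zero_le) (fun r => ?_)
    have hsub : Metric.ball a r \ (A ∩ C) ⊆ (Metric.ball a r \ A) ∪ (Metric.ball a r \ C) := by
      intro x hx
      rcases hx with ⟨hxb, hxn⟩
      by_cases hxa : x ∈ A
      · right; exact ⟨hxb, fun hxc => hxn ⟨hxa, hxc⟩⟩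
      · left; exact ⟨hxb, hxa⟩
    calc volume (Metric.ball a r \ (A ∩ C)) / volume (Metric.ball a r)
        ≤ volume ((Metric.ball a r \ A) ∪ (Metric.ball a r \ C)) / volume (Metric.ball a r) :=
          ENNReal.div_le_div_right (measure_mono hsub) _
      _ ≤ (volume (Metric.ball a r \ A) + volume (Metric.ball a r \ C))
            / volume (Metric.ball a r) :=
          ENNReal.div_le_div_right (measure_union_le _ _) _
      _ = volume (Metric.ball a r \ A) / volume (Metric.ball a r)
            + volume (Metric.ball a r \ C) / volume (Metric.ball a r) :=
          ENNReal.add_div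
  refine ⟨part1, ?_, ?_⟩
  -- Part 2
  · intro s hsmem
    rcases Set.mem_add.1 hsmem with ⟨a, ha, b, hb, hab⟩
    have hD : IsDensityPoint (A ∩ ((fun y => (a + b) - y) '' B)) a := part1 a b ha hb
    rw [hab] at hD
    by_contra hcon
    push_neg at hcon
    have h0 : volume (A ∩ ((fun y => s - y) '' B)) = 0 := le_antisymm hcon zero_le
    have hzero : Tendsto (fun r : ℝ =>
        volume ((A ∩ ((fun y => s - y) '' B)) ∩ Metric.ball a r) / volume (Metric.ball a r))
        (𝓝[>] 0) (𝓝 0) := by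
      have : ∀ r : ℝ,
          volume ((A ∩ ((fun y => s - y) '' B)) ∩ Metric.ball a r)
            / volume (Metric.ball a r) = 0 := by
        intro r
        rw [measure_mono_null inter_subset_left h0, ENNReal.zero_div]
      simpa only [this] using tendsto_const_nhds
    exact one_ne_zero (tendsto_nhds_unique hD hzero)
  -- Part 3
  · intro hA0 hB0
    -- closed balls vs open balls
    have key : ∀ (x : Fin d → ℝ) (S : Set (Fin d → ℝ)) (r : ℝ),
        volume (S ∩ Metric.closedBall x r) = volume (S ∩ Metric.ball x r) := by
      intro x S r
      refine le_antisymm ?_ (measure_mono (inter_subset_inter_right _ Metric.ball_subset_closedBall))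
      calc volume (S ∩ Metric.closedBall x r)
          ≤ volume (S ∩ Metric.ball x r ∪ Metric.sphere x r) := by
            refine measure_mono ?_
            rintro y ⟨hyS, hyc⟩
            rcases lt_or_eq_of_le (Metric.mem_closedBall.1 hyc) with h | h
            · exact Or.inl ⟨hyS, h⟩
            · exact Or.inr h
        _ ≤ volume (S ∩ Metric.ball x r) + volume (Metric.sphere x r) := measure_union_le _ _
        _ = volume (S ∩ Metric.ball x r) := by
            rw [Measure.addHaar_sphere, add_zero]
    have keyb : ∀ (x : Fin d → ℝ) (r : ℝ),
        volume (Metric.closedBall x r) = volume (Metric.ball x r) := by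
      intro x r
      simpa using key x Set.univ r
    -- Lebesgue density theorem
    have hdens : ∀ (S : Set (Fin d → ℝ)), MeasurableSet S →
        volume (S \ densityPoints S) = 0 := by
      intro S hS
      have hae := Besicovitch.ae_tendsto_measure_inter_div volume S
      have hae' : ∀ᵐ x ∂volume.restrict S, x ∈ densityPoints S := by
        filter_upwards [hae] with x hx
        have : (fun r : ℝ => volume (S ∩ Metric.closedBall x r) / volume (Metric.closedBall x r))
            = fun r : ℝ => volume (S ∩ Metric.ball x r) / volume (Metric.ball x r) := by
          funext r; rw [key, keyb]
        rw [this] at hx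
        exact hx
      have h0 := ae_iff.1 hae'
      rw [Measure.restrict_apply' hS] at h0
      have heq : S \ densityPoints S = {a | a ∉ densityPoints S} ∩ S := by
        ext x; simp only [Set.mem_diff, Set.mem_inter_iff, Set.mem_setOf_eq]; tauto
      rw [heq]
      exact h0
    -- B has a density point
    have hBd : (densityPoints B).Nonempty := by
      rcases Set.eq_empty_or_nonempty (densityPoints B) with h | h
      · exfalso
        have h2 := hdens B hB
        rw [h, Set.diff_empty] at h2
        exact hB0.ne' h2
      · exact h
    rcases hBd with ⟨b, hb⟩
    -- translate
    have htrans : volume (densityPoints A) = volume (densityPoints A + {b}) := by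
      have : densityPoints A + {b} = (fun x => x + (-b)) ⁻¹' densityPoints A := by
        ext y
        simp only [Set.add_singleton, Set.mem_image, Set.mem_preimage]
        constructor
        · rintro ⟨x, hx, rfl⟩; simpa using hx
        · intro hy; exact ⟨y + (-b), hy, by abel⟩
      rw [this, measure_preimage_add_right]
    calc volume A ≤ volume (A ∩ densityPoints A) + volume (A \ densityPoints A) :=
          measure_le_inter_add_diff _ _ _
      _ = volume (A ∩ densityPoints A) := by rw [hdens A hA, add_zero]
      _ ≤ volume (densityPoints A) := measure_mono inter_subset_right
      _ = volume (densityPoints A + {b}) := htrans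
      _ ≤ volume (densityPoints A + densityPoints B) :=
          measure_mono (add_subset_add_left (Set.singleton_subset_iff.2 hb))
end
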